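/- Grade S by assigning the variables the (cohomological) degrees deg(a) = 2, deg(b) = 3, deg(c) = 2, deg(d) = 3, and for each integer e ≥ 0 let N_e denote the image under π of the submodule of weighted-homogeneous polynomials of weighted degree e. Then each N_e is a finite-dimensional ℤ/2-vector space, and the Poincaré series of N satisfies (∑_{e≥0} dim_{ℤ/2}(N_e) · t^e) · (1 − t²)² · (1 − t³)² = (1 − t⁵)·(1 − t⁹) as an identity of formal power series over ℤ. -/

import Mathlib

open MvPolynomial

/-- `S = ℤ/2[a,b,c,d] ≅ H^*(BSO(3)²; ℤ/2)` with `a = w₂'`, `b = w₃'`, `c = w₂''`, `d = w₃''`. -/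
noncomputable abbrev S : Type := MvPolynomial (Fin 4) (ZMod 2)

noncomputable def a : S := X 0
noncomputable def b : S := X 1
noncomputable def c : S := X 2
noncomputable def d : S := X 3

/-- The ideal `J = (a·d + c·b, b·d² + b²·d)` of relations. -/
noncomputable def J : Ideal S := Ideal.span {a * d + c * b, b * d ^ 2 + b ^ 2 * d}

/-- `N = S ⧸ J`, the bottom line of the `E_∞`-term. -/
noncomputable abbrev N : Type := S ⧸ J

/-- The quotient map `π : S → N`. -/
noncomputable def π : S →+* N := Ideal.Quotient.mk J

/-- Cohomological degrees `deg(a) = 2`, `deg(b) = 3`, `deg(c) = 2`, `deg(d) = 3`. -/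
def cdeg : Fin 4 → ℕ := ![2, 3, 2, 3]

/-- `N_e`: the image under `π` of the weighted-homogeneous polynomials of degree `e`. -/
noncomputable def Ndeg (e : ℕ) : Submodule (ZMod 2) N :=
  Submodule.map (Ideal.Quotient.mkₐ (ZMod 2) J).toLinearMap
    (weightedHomogeneousSubmodule (ZMod 2) cdeg e)

namespace Aux

open Finset

noncomputable def r1 : S := a * d + c * b
noncomputable def r2 : S := b * d ^ 2 + b ^ 2 * d

lemma hJ : J = Ideal.span {r1, r2} := rfl

lemma r2_eq : r2 = b * (d * (b + d)) := by unfold r2; ring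

lemma ha : IsWeightedHomogeneous cdeg a 2 := isWeightedHomogeneous_X _ _ 0
lemma hb : IsWeightedHomogeneous cdeg b 3 := isWeightedHomogeneous_X _ _ 1
lemma hc : IsWeightedHomogeneous cdeg c 2 := isWeightedHomogeneous_X _ _ 2
lemma hd : IsWeightedHomogeneous cdeg d 3 := isWeightedHomogeneous_X _ _ 3

lemma hr1 : IsWeightedHomogeneous cdeg r1 5 := (ha.mul hd).add (hc.mul hb)

lemma hbd : IsWeightedHomogeneous cdeg (b + d) 3 := hb.add hd

lemma hr2 : IsWeightedHomogeneous cdeg r2 9 := by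
  rw [r2_eq]; exact hb.mul (hd.mul hbd)

-- primality of variables
lemma prime_X_zero : Prime (X 0 : S) := by
  have h := MulEquiv.prime_iff (MvPolynomial.finSuccEquiv (ZMod 2) 3).toMulEquiv (p := (X 0 : S))
  rw [← h]
  have : (MvPolynomial.finSuccEquiv (ZMod 2) 3).toMulEquiv (X 0 : S) = Polynomial.X :=
    finSuccEquiv_X_zero
  rw [this]
  exact Polynomial.prime_X

lemma prime_Xi (i : Fin 4) : Prime (X i : S) := by
  have h := MulEquiv.prime_iff (MvPolynomial.renameEquiv (ZMod 2) (Equiv.swap i 0)).toMulEquiv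
    (p := (X i : S))
  rw [← h]
  simpa [MvPolynomial.renameEquiv, Equiv.swap_apply_left] using prime_X_zero

lemma prime_b : Prime b := prime_Xi 1
lemma prime_d : Prime d := prime_Xi 3

lemma two_eq_zero : (2 : S) = 0 := by
  have : (2 : S) = C (2 : ZMod 2) := by
    rw [map_ofNat]
  rw [this]
  have h2 : (2 : ZMod 2) = 0 := rfl
  rw [h2, map_zero]

lemma add_self (p : S) : p + p = 0 := by
  have : p + p = 2 * p := by ring
  rw [this, two_eq_zero, zero_mul]

/-- The involution swapping `b ↦ b + d`. -/
noncomputable def τ : S →ₐ[ZMod 2] S := aeval (Function.update X 1 (X 1 + X 3))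

lemma τX1 : τ (X 1) = X 1 + X 3 := by simp [τ]

lemma τX (i : Fin 4) (hi : i ≠ 1) : τ (X i) = X i := by simp [τ, Function.update_of_ne hi]

lemma τinv : (τ.comp τ) = AlgHom.id (ZMod 2) S := by
  apply MvPolynomial.algHom_ext
  intro i
  by_cases hi : i = 1
  · subst hi
    simp only [AlgHom.comp_apply, τX1, map_add, τX 3 (by decide), AlgHom.id_apply]
    rw [add_assoc, add_self, add_zero]
  · simp [AlgHom.comp_apply, τX i hi, hi]

noncomputable def τe : S ≃ₐ[ZMod 2] S := AlgEquiv.ofAlgHom τ τ τinv τinv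

lemma prime_bd : Prime (b + d) := by
  have h := MulEquiv.prime_iff τe.toMulEquiv (p := b)
  have : τe b = b + d := τX1
  rw [← this]
  exact h.mpr prime_b


/-- kill `b` -/
noncomputable def ψb : S →ₐ[ZMod 2] S := aeval (Function.update X 1 0)
/-- kill `d` -/
noncomputable def ψd : S →ₐ[ZMod 2] S := aeval (Function.update X 3 0)
/-- send `d ↦ b` -/
noncomputable def ψs : S →ₐ[ZMod 2] S := aeval (Function.update X 3 (X 1))
/-- kill `c` -/
noncomputable def ψc : S →ₐ[ZMod 2] S := aeval (Function.update X 2 0)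

lemma Xij_ne_zero (i j : Fin 4) : (X i * X j : S) ≠ 0 :=
  mul_ne_zero (X_ne_zero i) (X_ne_zero j)

lemma psib_r1 : ψb r1 = a * d := by
  simp [ψb, r1, a, b, c, d, Function.update_of_ne, Function.update_self]

lemma b_not_dvd_r1 : ¬ b ∣ r1 := by
  rintro ⟨q, hq⟩
  have := congrArg ψb hq
  rw [psib_r1, map_mul] at this
  have hb0 : ψb b = 0 := by simp [ψb, b]
  rw [hb0, zero_mul] at this
  exact Xij_ne_zero 0 3 (by simpa [a, d] using this)

lemma d_not_dvd_r1 : ¬ d ∣ r1 := by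
  rintro ⟨q, hq⟩
  have := congrArg ψd hq
  have h1 : ψd r1 = c * b := by
    simp [ψd, r1, a, b, c, d, Function.update_of_ne, Function.update_self]
  have hd0 : ψd d = 0 := by simp [ψd, d]
  rw [h1, map_mul, hd0, zero_mul] at this
  exact Xij_ne_zero 2 1 (by simpa [c, b] using this)

lemma bd_not_dvd_r1 : ¬ (b + d) ∣ r1 := by
  rintro ⟨q, hq⟩
  have : ψc (ψs r1) = ψc (ψs (b + d) * ψs q) := by rw [hq, map_mul]
  have h1 : ψs r1 = a * b + c * b := by
    simp [ψs, r1, a, b, c, d, Function.update_of_ne, Function.update_self]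
  have h2 : ψc (a * b + c * b) = a * b := by
    simp [ψc, a, b, c, Function.update_of_ne, Function.update_self]
  have h3 : ψs (b + d) = 0 := by
    have : ψs (b + d) = X 1 + X 1 := by
      simp [ψs, b, d, Function.update_of_ne, Function.update_self]
    rw [this]
    exact add_self _
  rw [h1, h2, h3, zero_mul, map_zero] at this
  exact Xij_ne_zero 0 1 (by simpa [a, b] using this)

lemma r1_ne_zero : r1 ≠ 0 := by
  intro h
  have : ψb r1 = 0 := by rw [h, map_zero]
  rw [psib_r1] at this
  exact Xij_ne_zero 0 3 (by simpa [a, d] using this)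

lemma bd_ne_zero : (b + d) ≠ 0 := prime_bd.ne_zero

lemma r2_ne_zero : r2 ≠ 0 := by
  rw [r2_eq]
  exact mul_ne_zero (X_ne_zero 1) (mul_ne_zero (X_ne_zero 3) bd_ne_zero)

lemma key_factor {g h : S} (hE : g * r1 = h * r2) : ∃ q, g = r2 * q ∧ h = r1 * q := by
  have hb : b ∣ g := by
    rcases (prime_b.dvd_mul).mp ⟨h * (d * (b + d)), by rw [hE, r2_eq]; ring⟩ with h1 | h1
    · exact h1
    · exact absurd h1 b_not_dvd_r1
  obtain ⟨g1, hg1⟩ := hb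
  have hE1 : g1 * r1 = h * (d * (b + d)) := by
    apply mul_left_cancel₀ prime_b.ne_zero
    calc b * (g1 * r1) = (b * g1) * r1 := by ring
    _ = h * r2 := by rw [← hg1, hE]
    _ = b * (h * (d * (b + d))) := by rw [r2_eq]; ring
  have hd1 : d ∣ g1 := by
    rcases (prime_d.dvd_mul).mp ⟨h * (b + d), by rw [hE1]; ring⟩ with h1 | h1
    · exact h1
    · exact absurd h1 d_not_dvd_r1
  obtain ⟨g2, hg2⟩ := hd1
  have hE2 : g2 * r1 = h * (b + d) := by
    apply mul_left_cancel₀ prime_d.ne_zero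
    calc d * (g2 * r1) = (d * g2) * r1 := by ring
    _ = h * (d * (b + d)) := by rw [← hg2, hE1]
    _ = d * (h * (b + d)) := by ring
  have hbd1 : (b + d) ∣ g2 := by
    rcases (prime_bd.dvd_mul).mp ⟨h, by rw [hE2]; ring⟩ with h1 | h1
    · exact h1
    · exact absurd h1 bd_not_dvd_r1
  obtain ⟨q, hq⟩ := hbd1
  refine ⟨q, ?_, ?_⟩
  · rw [hg1, hg2, hq, r2_eq]; ring
  · apply mul_left_cancel₀ bd_ne_zero
    calc (b + d) * h = h * (b + d) := by ring
    _ = g2 * r1 := hE2.symm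
    _ = (b + d) * (r1 * q) := by rw [hq]; ring


lemma hc_mul {φ : S} {m : ℕ} (hφ : IsWeightedHomogeneous cdeg φ m) (q : S) (n : ℕ) :
    weightedHomogeneousComponent cdeg n (φ * q) =
      if m ≤ n then φ * weightedHomogeneousComponent cdeg (n - m) q else 0 := by
  classical
  have hfin := weightedHomogeneousComponent_finsupp (w := cdeg) q
  set T := hfin.toFinset with hT
  have hq : q = ∑ i ∈ T, weightedHomogeneousComponent cdeg i q := by
    conv_lhs => rw [← sum_weightedHomogeneousComponent cdeg q]
    rw [finsum_eq_sum _ hfin]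
  have step1 : weightedHomogeneousComponent cdeg n (φ * q)
      = ∑ i ∈ T, weightedHomogeneousComponent cdeg n
          (φ * weightedHomogeneousComponent cdeg i q) := by
    conv_lhs => rw [hq]
    rw [Finset.mul_sum, map_sum]
  have step2 : ∀ i ∈ T, weightedHomogeneousComponent cdeg n
        (φ * weightedHomogeneousComponent cdeg i q)
      = if m + i = n then φ * weightedHomogeneousComponent cdeg i q else 0 := by
    intro i _
    have hhom : IsWeightedHomogeneous cdeg (φ * weightedHomogeneousComponent cdeg i q) (m + i) :=
      hφ.mul (weightedHomogeneousComponent_isWeightedHomogeneous i q)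
    by_cases hi : m + i = n
    · rw [if_pos hi, ← hi, hhom.weightedHomogeneousComponent_same]
    · rw [if_neg hi]
      exact hhom.weightedHomogeneousComponent_ne n (fun hcon => hi hcon.symm)
  rw [step1, Finset.sum_congr rfl step2]
  by_cases hmn : m ≤ n
  · rw [if_pos hmn]
    have : ∀ i ∈ T, (if m + i = n then φ * weightedHomogeneousComponent cdeg i q else 0)
        = if i = n - m then φ * weightedHomogeneousComponent cdeg i q else 0 := by
      intro i _
      exact if_congr (by omega) rfl rfl
    rw [Finset.sum_congr rfl this, Finset.sum_ite_eq' T (n - m)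
      (fun i => φ * weightedHomogeneousComponent cdeg i q)]
    by_cases hmem : n - m ∈ T
    · rw [if_pos hmem]
    · rw [if_neg hmem]
      have h0 : weightedHomogeneousComponent cdeg (n - m) q = 0 := by
        by_contra hne
        exact hmem (hfin.mem_toFinset.mpr hne)
      rw [h0, mul_zero]
  · rw [if_neg hmn]
    apply Finset.sum_eq_zero
    intro i _
    rw [if_neg (by omega)]

lemma mem_J_homog {f : S} {n : ℕ} (hf : f ∈ J) (hfh : IsWeightedHomogeneous cdeg f n) :
    ∃ g h : S, g ∈ weightedHomogeneousSubmodule (ZMod 2) cdeg (n - 5) ∧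
      h ∈ weightedHomogeneousSubmodule (ZMod 2) cdeg (n - 9) ∧
      f = r1 * g + r2 * h ∧ (n < 5 → g = 0) ∧ (n < 9 → h = 0) := by
  rw [hJ, Ideal.mem_span_pair] at hf
  obtain ⟨u, v, huv⟩ := hf
  have hfc : f = weightedHomogeneousComponent cdeg n f := hfh.weightedHomogeneousComponent_same.symm
  have hexp : f = weightedHomogeneousComponent cdeg n (r1 * u)
      + weightedHomogeneousComponent cdeg n (r2 * v) := by
    conv_lhs => rw [hfc]
    rw [← map_add]
    congr 1
    rw [← huv]; ring
  rw [hc_mul hr1 u n, hc_mul hr2 v n] at hexp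
  refine ⟨if 5 ≤ n then weightedHomogeneousComponent cdeg (n - 5) u else 0,
    if 9 ≤ n then weightedHomogeneousComponent cdeg (n - 9) v else 0, ?_, ?_, ?_, ?_, ?_⟩
  · split_ifs
    · exact weightedHomogeneousComponent_mem cdeg u (n - 5)
    · exact Submodule.zero_mem _
  · split_ifs
    · exact weightedHomogeneousComponent_mem cdeg v (n - 9)
    · exact Submodule.zero_mem _
  · by_cases h5 : 5 ≤ n <;> by_cases h9 : 9 ≤ n <;>
      simp only [h5, h9, if_true, if_false, if_pos, if_neg, mul_zero, add_zero, zero_add] at hexp ⊢ <;>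
      rw [hexp] <;> ring
  · intro h; rw [if_neg (by omega)]
  · intro h; rw [if_neg (by omega)]


noncomputable def W (n : ℕ) : Submodule (ZMod 2) S := weightedHomogeneousSubmodule (ZMod 2) cdeg n

lemma wt_apply (μ : Fin 4 →₀ ℕ) :
    Finsupp.weight cdeg μ = 2 * μ 0 + 3 * μ 1 + 2 * μ 2 + 3 * μ 3 := by
  rw [Finsupp.weight_apply, Finsupp.sum_fintype _ _ (fun i => zero_smul ℕ (cdeg i))]
  show ∑ i : Fin 4, μ i * cdeg i = _
  rw [Fin.sum_univ_four]
  show μ 0 * 2 + μ 1 * 3 + μ 2 * 2 + μ 3 * 3 = _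
  ring

noncomputable def wtSet (n : ℕ) : Finset (Fin 4 →₀ ℕ) :=
  (Finset.Iic (Finsupp.equivFunOnFinite.symm fun _ => n)).filter
    fun μ => Finsupp.weight cdeg μ = n

lemma mem_wtSet {μ : Fin 4 →₀ ℕ} {n : ℕ} : μ ∈ wtSet n ↔ Finsupp.weight cdeg μ = n := by
  unfold wtSet
  rw [Finset.mem_filter, Finset.mem_Iic, and_iff_right_iff_imp]
  intro h
  intro i
  have h2 := wt_apply μ
  rw [h] at h2
  have : μ i ≤ n := by
    fin_cases i <;> simp <;> omega
  exact this

noncomputable def cnt (n : ℕ) : ℕ := (wtSet n).card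

lemma wtSet_coe (n : ℕ) : {d : Fin 4 →₀ ℕ | Finsupp.weight cdeg d = n} = ↑(wtSet n) := by
  ext μ; simp [mem_wtSet]

noncomputable def WEquiv (n : ℕ) : W n ≃ₗ[ZMod 2] ((wtSet n : Set (Fin 4 →₀ ℕ)) →₀ ZMod 2) := by
  have h : W n = AddMonoidAlgebra.supported (ZMod 2) (ZMod 2) ((wtSet n : Set (Fin 4 →₀ ℕ))) := by
    unfold W
    rw [weightedHomogeneousSubmodule_eq_finsupp_supported, wtSet_coe]
  exact (LinearEquiv.ofEq _ _ h).trans (AddMonoidAlgebra.supportedEquivFinsupp (R := ZMod 2) (S := ZMod 2) _)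

instance (n : ℕ) : Module.Finite (ZMod 2) (W n) :=
  Module.Finite.equiv (WEquiv n).symm

lemma finrank_W (n : ℕ) : Module.finrank (ZMod 2) (W n) = cnt n := by
  rw [LinearEquiv.finrank_eq (WEquiv n), Module.finrank_finsupp_self]
  exact Fintype.card_coe _


noncomputable def G (m : ℕ) : PowerSeries ℤ := PowerSeries.mk fun n => if m ∣ n then 1 else 0

lemma Ginv {m : ℕ} (hm : 0 < m) : G m * (1 - (PowerSeries.X : PowerSeries ℤ) ^ m) = 1 := by
  ext n
  rw [mul_sub, mul_one, map_sub, PowerSeries.coeff_mul_X_pow']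
  simp only [G, PowerSeries.coeff_mk, PowerSeries.coeff_one]
  by_cases h0 : n = 0
  · subst h0
    rw [if_pos (dvd_zero m), if_neg (by omega), sub_zero, if_pos rfl]
  · rw [if_neg h0]
    by_cases hmn : m ≤ n
    · rw [if_pos hmn]
      have hiff : (m ∣ n) ↔ (m ∣ n - m) := by
        constructor
        · intro h; exact Nat.dvd_sub h dvd_rfl
        · intro h
          have hn : n = n - m + m := by omega
          rw [hn]; exact Nat.dvd_add h dvd_rfl
      by_cases hd : m ∣ n
      · rw [if_pos hd, if_pos (hiff.mp hd), sub_self]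
      · rw [if_neg hd, if_neg (mt hiff.mpr hd), sub_self]
    · rw [if_neg hmn, if_neg (fun hd => hmn (Nat.le_of_dvd (by omega) hd)), sub_zero]

def cnt2 (u : ℕ) : ℕ := ((antidiagonal u).filter fun p => 2 ∣ p.1 ∧ 2 ∣ p.2).card
def cnt3 (u : ℕ) : ℕ := ((antidiagonal u).filter fun p => 3 ∣ p.1 ∧ 3 ∣ p.2).card

lemma coeff_GG {m : ℕ} (u : ℕ) :
    (PowerSeries.coeff u) (G m * G m)
      = ((antidiagonal u).filter fun p => m ∣ p.1 ∧ m ∣ p.2).card := by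
  rw [PowerSeries.coeff_mul]
  rw [Finset.card_filter]
  push_cast
  refine Finset.sum_congr rfl fun p _ => ?_
  simp only [G, PowerSeries.coeff_mk]
  by_cases h1 : m ∣ p.1 <;> by_cases h2 : m ∣ p.2 <;>
    simp [h1, h2]


lemma efof (f : Fin 4 → ℕ) (i : Fin 4) : (Finsupp.equivFunOnFinite.symm f) i = f i := rfl

lemma cnt_eq (n : ℕ) : cnt n = ∑ p ∈ antidiagonal n, cnt2 p.1 * cnt3 p.2 := by
  classical
  unfold cnt
  rw [Finset.card_eq_sum_card_fiberwise
    (f := fun μ : Fin 4 →₀ ℕ => (2 * μ 0 + 2 * μ 2, 3 * μ 1 + 3 * μ 3))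
    (t := antidiagonal n)
    (by
      intro μ hμ
      rw [Finset.mem_coe, HasAntidiagonal.mem_antidiagonal]
      have := mem_wtSet.mp hμ
      rw [wt_apply] at this
      show 2 * μ 0 + 2 * μ 2 + (3 * μ 1 + 3 * μ 3) = n
      omega)]
  refine Finset.sum_congr rfl fun p hp => ?_
  obtain ⟨p1, p2⟩ := p
  have hpn : p1 + p2 = n := HasAntidiagonal.mem_antidiagonal.mp hp
  rw [cnt2, cnt3, ← Finset.card_product]
  apply Finset.card_nbij'
    (i := fun μ => ((2 * μ 0, 2 * μ 2), (3 * μ 1, 3 * μ 3)))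
    (j := fun q => Finsupp.equivFunOnFinite.symm ![q.1.1 / 2, q.2.1 / 3, q.1.2 / 2, q.2.2 / 3])
  · intro μ hμ
    rw [Finset.mem_coe, Finset.mem_filter] at hμ
    obtain ⟨hμ1, hμ2⟩ := hμ
    rw [Prod.mk.injEq] at hμ2
    obtain ⟨h1, h2⟩ := hμ2
    rw [Finset.mem_coe, Finset.mem_product, Finset.mem_filter, Finset.mem_filter,
      HasAntidiagonal.mem_antidiagonal, HasAntidiagonal.mem_antidiagonal]
    dsimp only
    exact ⟨⟨h1, ⟨μ 0, rfl⟩, ⟨μ 2, rfl⟩⟩, ⟨h2, ⟨μ 1, rfl⟩, ⟨μ 3, rfl⟩⟩⟩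
  · rintro ⟨⟨q11, q12⟩, q21, q22⟩ hq
    rw [Finset.mem_coe, Finset.mem_product, Finset.mem_filter, Finset.mem_filter,
      HasAntidiagonal.mem_antidiagonal, HasAntidiagonal.mem_antidiagonal] at hq
    obtain ⟨⟨hs1, ⟨x1, hx1⟩, ⟨x2, hx2⟩⟩, ⟨hs2, ⟨x3, hx3⟩, ⟨x4, hx4⟩⟩⟩ := hq
    dsimp only at hs1 hs2
    subst hx1; subst hx2; subst hx3; subst hx4
    rw [Finset.mem_coe, Finset.mem_filter]
    constructor
    · rw [mem_wtSet, wt_apply]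
      simp only [efof, Matrix.cons_val_zero, Matrix.cons_val_one, Matrix.head_cons,
        Matrix.cons_val_two, Matrix.tail_cons, Matrix.cons_val_three]
      omega
    · simp only [efof, Matrix.cons_val_zero, Matrix.cons_val_one, Matrix.head_cons,
        Matrix.cons_val_two, Matrix.tail_cons, Matrix.cons_val_three, Prod.mk.injEq]
      refine ⟨?_, ?_⟩ <;> omega
  · intro μ hμ
    ext i
    rw [efof]
    fin_cases i <;> simp <;> omega
  · rintro ⟨⟨q11, q12⟩, q21, q22⟩ hq
    rw [Finset.mem_coe, Finset.mem_product, Finset.mem_filter, Finset.mem_filter,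
      HasAntidiagonal.mem_antidiagonal, HasAntidiagonal.mem_antidiagonal] at hq
    obtain ⟨⟨hs1, ⟨x1, hx1⟩, ⟨x2, hx2⟩⟩, ⟨hs2, ⟨x3, hx3⟩, ⟨x4, hx4⟩⟩⟩ := hq
    dsimp only at hs1 hs2
    subst hx1; subst hx2; subst hx3; subst hx4
    simp only [efof, Matrix.cons_val_zero, Matrix.cons_val_one, Matrix.head_cons,
      Matrix.cons_val_two, Matrix.tail_cons, Matrix.cons_val_three, Prod.mk.injEq]
    refine ⟨⟨?_, ?_⟩, ?_, ?_⟩ <;> omega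

lemma F_eq : (PowerSeries.mk fun n => (cnt n : ℤ)) = G 2 * G 2 * (G 3 * G 3) := by
  ext n
  rw [PowerSeries.coeff_mk, PowerSeries.coeff_mul]
  have : ∀ p ∈ antidiagonal n,
      (PowerSeries.coeff p.1) (G 2 * G 2) * (PowerSeries.coeff p.2) (G 3 * G 3)
        = (cnt2 p.1 : ℤ) * (cnt3 p.2 : ℤ) := by
    intro p _
    rw [coeff_GG, coeff_GG, cnt2, cnt3]
  rw [Finset.sum_congr rfl this, cnt_eq n]
  push_cast
  rfl


lemma r1_mem_J : r1 ∈ J := by rw [hJ]; exact Ideal.subset_span (Set.mem_insert _ _)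
lemma r2_mem_J : r2 ∈ J := by
  rw [hJ]; exact Ideal.subset_span (Set.mem_insert_iff.mpr (Or.inr rfl))

noncomputable def mulL (p : S) : S →ₗ[ZMod 2] S := LinearMap.mulLeft (ZMod 2) p

lemma mulL_apply (p x : S) : mulL p x = p * x := rfl

noncomputable def K (n : ℕ) : Submodule (ZMod 2) S := (J.restrictScalars (ZMod 2)) ⊓ W n

lemma mem_K {x : S} {n : ℕ} : x ∈ K n ↔ x ∈ J ∧ IsWeightedHomogeneous cdeg x n := by
  unfold K W
  rw [Submodule.mem_inf, Submodule.restrictScalars_mem, mem_weightedHomogeneousSubmodule]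

lemma mem_W {x : S} {n : ℕ} : x ∈ W n ↔ IsWeightedHomogeneous cdeg x n :=
  mem_weightedHomogeneousSubmodule _ _ _ _

lemma homog_cast {f : S} {m m' : ℕ} (h : IsWeightedHomogeneous cdeg f m) (hmm : m = m') :
    IsWeightedHomogeneous cdeg f m' := hmm ▸ h

lemma hK0 {n : ℕ} (h : n < 5) : K n = ⊥ := by
  rw [Submodule.eq_bot_iff]
  intro x hx
  rw [mem_K] at hx
  obtain ⟨g, h', _, _, hx2, hg0, hh0⟩ := mem_J_homog hx.1 hx.2
  rw [hx2, hg0 h, hh0 (by omega), mul_zero, mul_zero, add_zero]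

lemma M1_le {n : ℕ} (h5 : 5 ≤ n) : Submodule.map (mulL r1) (W (n - 5)) ≤ K n := by
  rintro x ⟨g, hg, rfl⟩
  have hg' : IsWeightedHomogeneous cdeg g (n - 5) := hg
  rw [mulL_apply, mem_K]
  exact ⟨Ideal.mul_mem_right _ _ r1_mem_J, homog_cast (hr1.mul hg') (by omega)⟩

lemma M2_le {n : ℕ} (h9 : 9 ≤ n) : Submodule.map (mulL r2) (W (n - 9)) ≤ K n := by
  rintro x ⟨g, hg, rfl⟩
  have hg' : IsWeightedHomogeneous cdeg g (n - 9) := hg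
  rw [mulL_apply, mem_K]
  exact ⟨Ideal.mul_mem_right _ _ r2_mem_J, homog_cast (hr2.mul hg') (by omega)⟩

lemma hK5 {n : ℕ} (h5 : 5 ≤ n) (h9 : n < 9) : K n = Submodule.map (mulL r1) (W (n - 5)) := by
  refine le_antisymm ?_ (M1_le h5)
  intro x hx
  rw [mem_K] at hx
  obtain ⟨g, h', hg, _, hx2, _, hh0⟩ := mem_J_homog hx.1 hx.2
  rw [hx2, hh0 h9, mul_zero, add_zero]
  exact ⟨g, hg, rfl⟩

lemma hK9 {n : ℕ} (h9 : 9 ≤ n) :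
    K n = Submodule.map (mulL r1) (W (n - 5)) ⊔ Submodule.map (mulL r2) (W (n - 9)) := by
  refine le_antisymm ?_ (sup_le (M1_le (by omega)) (M2_le h9))
  intro x hx
  rw [mem_K] at hx
  obtain ⟨g, h', hg, hh, hx2, _, _⟩ := mem_J_homog hx.1 hx.2
  rw [Submodule.mem_sup]
  exact ⟨r1 * g, ⟨g, hg, rfl⟩, r2 * h', ⟨h', hh, rfl⟩, hx2.symm⟩

lemma inf_structure {n : ℕ} (h9 : 9 ≤ n) {x : S}
    (hx : x ∈ Submodule.map (mulL r1) (W (n - 5)) ⊓ Submodule.map (mulL r2) (W (n - 9))) :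
    (n < 14 → x = 0) ∧ (14 ≤ n → ∃ q ∈ W (n - 14), x = (r1 * r2) * q) := by
  obtain ⟨⟨g, hg, hxg⟩, ⟨h', hh, hxh⟩⟩ := hx
  rw [mulL_apply] at hxg hxh
  replace hg : IsWeightedHomogeneous cdeg g (n - 5) := hg
  replace hh : IsWeightedHomogeneous cdeg h' (n - 9) := hh
  have hE : g * r1 = h' * r2 := by
    rw [mul_comm g r1, mul_comm h' r2, hxg, hxh]
  obtain ⟨q, hq1, _⟩ := key_factor hE
  have hgc : g = weightedHomogeneousComponent cdeg (n - 5) g :=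
    hg.weightedHomogeneousComponent_same.symm
  have hgc2 : g = if 9 ≤ n - 5 then r2 * weightedHomogeneousComponent cdeg (n - 5 - 9) q
      else 0 := by
    conv_lhs => rw [hgc, hq1]
    exact hc_mul hr2 q (n - 5)
  constructor
  · intro h14
    rw [if_neg (by omega)] at hgc2
    rw [← hxg, hgc2, mul_zero]
  · intro h14
    rw [if_pos (by omega)] at hgc2
    refine ⟨weightedHomogeneousComponent cdeg (n - 5 - 9) q, ?_, ?_⟩
    · have := weightedHomogeneousComponent_mem cdeg q (n - 5 - 9)
      have heq : n - 5 - 9 = n - 14 := by omega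
      rw [heq] at this
      exact this
    · have heq : n - 5 - 9 = n - 14 := by omega
      rw [← hxg, hgc2, heq]; ring

lemma hInfLow {n : ℕ} (h9 : 9 ≤ n) (h14 : n < 14) :
    Submodule.map (mulL r1) (W (n - 5)) ⊓ Submodule.map (mulL r2) (W (n - 9)) = ⊥ := by
  rw [Submodule.eq_bot_iff]
  exact fun x hx => (inf_structure h9 hx).1 h14

lemma hInf14 {n : ℕ} (h14 : 14 ≤ n) :
    Submodule.map (mulL r1) (W (n - 5)) ⊓ Submodule.map (mulL r2) (W (n - 9))
      = Submodule.map (mulL (r1 * r2)) (W (n - 14)) := by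
  apply le_antisymm
  · intro x hx
    obtain ⟨q, hq, hxq⟩ := (inf_structure (by omega) hx).2 h14
    exact ⟨q, hq, hxq.symm⟩
  · rintro x ⟨q, hq, rfl⟩
    replace hq : IsWeightedHomogeneous cdeg q (n - 14) := hq
    constructor
    · refine ⟨r2 * q, ?_, ?_⟩
      · show IsWeightedHomogeneous cdeg _ _
        exact homog_cast (hr2.mul hq) (by omega)
      · rw [mulL_apply, mulL_apply]; ring
    · refine ⟨r1 * q, ?_, ?_⟩
      · show IsWeightedHomogeneous cdeg _ _
        exact homog_cast (hr1.mul hq) (by omega)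
      · rw [mulL_apply, mulL_apply]; ring

-- rank bookkeeping
lemma finrank_map_mulL {p : S} (hp : p ≠ 0) (m : ℕ) :
    Module.finrank (ZMod 2) (Submodule.map (mulL p) (W m)) = cnt m := by
  have hinj : Function.Injective (mulL p) := by
    intro x y hxy
    exact mul_left_cancel₀ hp hxy
  rw [← LinearEquiv.finrank_eq (Submodule.equivMapOfInjective (mulL p) hinj (W m))]
  exact finrank_W m

instance instFDmap (p : S) (m : ℕ) :
    Module.Finite (ZMod 2) (Submodule.map (mulL p) (W m)) :=
  Module.Finite.map (W m) (mulL p)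

lemma finrank_K_lt5 {n : ℕ} (h : n < 5) : Module.finrank (ZMod 2) (K n) = 0 := by
  rw [hK0 h]
  exact finrank_bot _ _

lemma finrank_K_5 {n : ℕ} (h5 : 5 ≤ n) (h9 : n < 9) :
    Module.finrank (ZMod 2) (K n) = cnt (n - 5) := by
  rw [hK5 h5 h9]
  exact finrank_map_mulL r1_ne_zero _

lemma finrank_K_9 {n : ℕ} (h9 : 9 ≤ n) (h14 : n < 14) :
    Module.finrank (ZMod 2) (K n) = cnt (n - 5) + cnt (n - 9) := by
  rw [hK9 h9]
  have := Submodule.finrank_sup_add_finrank_inf_eq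
    (Submodule.map (mulL r1) (W (n - 5))) (Submodule.map (mulL r2) (W (n - 9)))
  rw [hInfLow h9 h14] at this
  rw [finrank_map_mulL r1_ne_zero, finrank_map_mulL r2_ne_zero] at this
  simpa using this

lemma finrank_K_14 {n : ℕ} (h14 : 14 ≤ n) :
    Module.finrank (ZMod 2) (K n) + cnt (n - 14) = cnt (n - 5) + cnt (n - 9) := by
  rw [hK9 (by omega)]
  have := Submodule.finrank_sup_add_finrank_inf_eq
    (Submodule.map (mulL r1) (W (n - 5))) (Submodule.map (mulL r2) (W (n - 9)))
  rw [hInf14 h14, finrank_map_mulL r1_ne_zero, finrank_map_mulL r2_ne_zero,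
    finrank_map_mulL (mul_ne_zero r1_ne_zero r2_ne_zero)] at this
  exact this

lemma K_le_W (n : ℕ) : K n ≤ W n := inf_le_right

lemma rank_Ndeg (n : ℕ) :
    Module.finrank (ZMod 2) (Ndeg n) + Module.finrank (ZMod 2) (K n) = cnt n := by
  classical
  set f : W n →ₗ[ZMod 2] N :=
    (Ideal.Quotient.mkₐ (ZMod 2) J).toLinearMap.comp (W n).subtype with hf
  have hrange : LinearMap.range f = Ndeg n := by
    rw [hf, LinearMap.range_comp, Submodule.range_subtype]
    rfl
  have hker : LinearMap.ker f = Submodule.comap (W n).subtype (K n) := by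
    ext x
    rw [LinearMap.mem_ker, Submodule.mem_comap]
    change (Ideal.Quotient.mkₐ (ZMod 2) J) (x : S) = 0 ↔ _
    rw [Ideal.Quotient.mkₐ_eq_mk, Ideal.Quotient.eq_zero_iff_mem, mem_K]
    exact ⟨fun h => ⟨h, mem_W.mp x.2⟩, fun h => h.1⟩
  have h1 := LinearMap.finrank_range_add_finrank_ker f
  rw [hrange, hker, finrank_W] at h1
  rw [← h1]
  have h2 : Module.finrank (ZMod 2) (Submodule.comap (W n).subtype (K n))
      = Module.finrank (ZMod 2) (K n) :=
    LinearEquiv.finrank_eq (Submodule.comapSubtypeEquivOfLe (K_le_W n))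
  omega

lemma coeffN (n : ℕ) : (Module.finrank (ZMod 2) (Ndeg n) : ℤ)
    = (cnt n : ℤ) - (if 5 ≤ n then (cnt (n - 5) : ℤ) else 0)
      - (if 9 ≤ n then (cnt (n - 9) : ℤ) else 0)
      + (if 14 ≤ n then (cnt (n - 14) : ℤ) else 0) := by
  have h := rank_Ndeg n
  by_cases h5 : 5 ≤ n
  · by_cases h9 : 9 ≤ n
    · by_cases h14 : 14 ≤ n
      · have hk := finrank_K_14 (n := n) h14
        rw [if_pos h5, if_pos h9, if_pos h14]
        omega
      · have hk := finrank_K_9 (n := n) h9 (by omega)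
        rw [if_pos h5, if_pos h9, if_neg h14]
        omega
    · have hk := finrank_K_5 (n := n) h5 (by omega)
      rw [if_pos h5, if_neg h9, if_neg (by omega)]
      omega
  · have hk := finrank_K_lt5 (n := n) (by omega)
    rw [if_neg h5, if_neg (by omega), if_neg (by omega)]
    omega

instance (e : ℕ) : Module.Finite (ZMod 2) (Ndeg e) := by
  unfold Ndeg
  exact Module.Finite.map (W e) _


end Aux

open PowerSeries in
theorem stmt_17 :
    (∀ e : ℕ, Module.Finite (ZMod 2) (Ndeg e)) ∧
    (PowerSeries.mk fun e => (Module.finrank (ZMod 2) (Ndeg e) : ℤ)) *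
        (1 - (X : ℤ⟦X⟧) ^ 2) ^ 2 * (1 - (X : ℤ⟦X⟧) ^ 3) ^ 2 =
      (1 - (X : ℤ⟦X⟧) ^ 5) * (1 - (X : ℤ⟦X⟧) ^ 9) := by
  constructor
  · intro e
    infer_instance
  · set A : ℤ⟦X⟧ := PowerSeries.mk fun n => (Aux.cnt n : ℤ) with hA
    have key : (PowerSeries.mk fun e => (Module.finrank (ZMod 2) (Ndeg e) : ℤ))
        = A - A * (X : ℤ⟦X⟧) ^ 5 - A * (X : ℤ⟦X⟧) ^ 9 + A * (X : ℤ⟦X⟧) ^ 14 := by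
      ext n
      rw [map_add, map_sub, map_sub, PowerSeries.coeff_mul_X_pow',
        PowerSeries.coeff_mul_X_pow', PowerSeries.coeff_mul_X_pow']
      simp only [hA, coeff_mk]
      rw [Aux.coeffN n]
    calc (PowerSeries.mk fun e => (Module.finrank (ZMod 2) (Ndeg e) : ℤ)) *
          (1 - (X : ℤ⟦X⟧) ^ 2) ^ 2 * (1 - (X : ℤ⟦X⟧) ^ 3) ^ 2
        = (Aux.G 2 * (1 - (X : ℤ⟦X⟧) ^ 2)) * ((Aux.G 2 * (1 - (X : ℤ⟦X⟧) ^ 2)) *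
            ((Aux.G 3 * (1 - (X : ℤ⟦X⟧) ^ 3)) * ((Aux.G 3 * (1 - (X : ℤ⟦X⟧) ^ 3)) *
              ((1 - (X : ℤ⟦X⟧) ^ 5) * (1 - (X : ℤ⟦X⟧) ^ 9))))) := by
          rw [key, hA, Aux.F_eq]
          ring
      _ = (1 - (X : ℤ⟦X⟧) ^ 5) * (1 - (X : ℤ⟦X⟧) ^ 9) := by
          rw [Aux.Ginv (by norm_num), Aux.Ginv (by norm_num)]
          ring
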